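/- Let G be a locally compact Hausdorff group with a left Haar measure, acting properly on a locally compact Hausdorff space X, and let β be a strongly continuous action of G by *-automorphisms on a C*-algebra B. Then for every x ∈ X, the evaluation map q_x: C₀(X×_G B) → B, q_x(F) = F(x), is a *-homomorphism whose image is exactly the fixed-point algebra B^{G_x} = {b ∈ B : β_k(b) = b for all k ∈ G_x}, and whose kernel is {F ∈ C₀(X×_G B) : F vanishes on the orbit G·x} = {F : F(x) = 0}. -/

import Mathlib

open MeasureTheory Set Filter Topology Function
set_option linter.unusedSectionVars false
set_option maxHeartbeats 1000000

/-- A continuous action of `G` on `X` is *proper* if the map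
`G × X → X × X, (g,x) ↦ (g • x, x)` is proper, i.e. preimages of compact sets
are compact. -/
def ProperAction (G X : Type*) [SMul G X] [TopologicalSpace G]
    [TopologicalSpace X] : Prop :=
  ∀ K : Set (X × X), IsCompact K →
    IsCompact ((fun p : G × X => (p.1 • p.2, p.2)) ⁻¹' K)

/-- The generalized fixed-point algebra `C₀(X ×_Γ B)`:  bounded continuous
functions `F : X → B` with `F (g • x) = g • F x`, such that the induced
function `‖F(·)‖` on the orbit space vanishes at infinity.  (Operations are
pointwise, the norm is the supremum norm.) -/
def IndAlg (Γ X B : Type*) [Group Γ] [TopologicalSpace X] [MulAction Γ X]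
    [SMul Γ B] [TopologicalSpace B] [Norm B] : Set (X → B) :=
  {F | Continuous F ∧ (∀ (g : Γ) (x : X), F (g • x) = g • F x) ∧
    (∃ C : ℝ, ∀ x : X, ‖F x‖ ≤ C) ∧
    ∀ ε : ℝ, 0 < ε → ∃ K : Set (Quotient (MulAction.orbitRel Γ X)), IsCompact K ∧
      ∀ x : X, Quotient.mk (MulAction.orbitRel Γ X) x ∉ K → ‖F x‖ < ε}


section Aux
variable {G : Type*} [Group G] [TopologicalSpace G] [IsTopologicalGroup G]
    [LocallyCompactSpace G] [T2Space G] [MeasurableSpace G] [BorelSpace G]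
    {X : Type*} [TopologicalSpace X] [LocallyCompactSpace X] [T2Space X]
    [MulAction G X] [ContinuousSMul G X]
    {B : Type*} [NormedRing B] [StarRing B] [CStarRing B] [NormedAlgebra ℂ B]
    [StarModule ℂ B] [CompleteSpace B]
    [MulSemiringAction G B] [SMulCommClass G ℂ B]

noncomputable def actHom (hstar : ∀ (g : G) (b : B), g • (star b) = star (g • b)) (g : G) :
    B →⋆ₙₐ[ℂ] B :=
  { toFun := fun b => g • b
    map_smul' := fun c b => smul_comm g c b
    map_zero' := smul_zero g
    map_add' := smul_add g
    map_mul' := smul_mul' g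
    map_star' := fun b => hstar g b }

theorem norm_smul_eq (hstar : ∀ (g : G) (b : B), g • (star b) = star (g • b))
    (g : G) (b : B) : ‖g • b‖ = ‖b‖ := by
  letI : CStarAlgebra B := {}
  refine le_antisymm (NonUnitalStarAlgHom.norm_apply_le (actHom hstar g) b) ?_
  have := NonUnitalStarAlgHom.norm_apply_le (actHom hstar g⁻¹) (g • b)
  simpa [actHom, inv_smul_smul] using this


theorem transporter_compact (hproper : ProperAction G X) {K L : Set X}
    (hK : IsCompact K) (hL : IsCompact L) :
    IsCompact {g : G | ∃ y ∈ L, g • y ∈ K} := by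
  have hP := hproper (K ×ˢ L) (hK.prod hL)
  have : {g : G | ∃ y ∈ L, g • y ∈ K} =
      Prod.fst '' ((fun p : G × X => (p.1 • p.2, p.2)) ⁻¹' (K ×ˢ L)) := by
    ext g
    simp only [mem_setOf_eq, mem_image, mem_preimage, mem_prod, Prod.exists]
    exact ⟨fun ⟨y, hy, hgy⟩ => ⟨g, y, ⟨hgy, hy⟩, rfl⟩,
      fun ⟨g', y, ⟨hgy, hy⟩, h⟩ => by cases h; exact ⟨y, hy, hgy⟩⟩
  rw [this]
  exact hP.image continuous_fst

theorem transporter_inv_compact (hproper : ProperAction G X) {K L : Set X}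
    (hK : IsCompact K) (hL : IsCompact L) :
    IsCompact {g : G | ∃ y ∈ L, g⁻¹ • y ∈ K} := by
  have : {g : G | ∃ y ∈ L, g⁻¹ • y ∈ K} = (fun g : G => g⁻¹) '' {g : G | ∃ y ∈ L, g • y ∈ K} := by
    ext g
    constructor
    · intro hg; exact ⟨g⁻¹, hg, inv_inv g⟩
    · rintro ⟨h, hh, rfl⟩; simpa using hh
  rw [this]
  exact (transporter_compact hproper hK hL).image continuous_inv


theorem exists_good_nhd (hproper : ProperAction G X)
    (hcont : ∀ b : B, Continuous fun g : G => g • b)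
    (x : X) (b : B) (hb : ∀ k ∈ MulAction.stabilizer G x, k • b = b) {ε : ℝ} (hε : 0 < ε) :
    ∃ V : Set X, IsCompact V ∧ V ∈ 𝓝 x ∧ ∀ h : G, h • x ∈ V → ‖h⁻¹ • b - b‖ ≤ ε := by
  classical
  obtain ⟨V0, hV0c, hV0n⟩ := exists_compact_mem_nhds x
  set C : Set G := {h : G | ε ≤ ‖h⁻¹ • b - b‖} with hCdef
  have hCcont : Continuous fun h : G => ‖h⁻¹ • b - b‖ :=
    (((hcont b).comp continuous_inv).sub continuous_const).norm
  have hCclosed : IsClosed C := isClosed_le continuous_const hCcont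
  have hS : IsCompact {h : G | h • x ∈ V0} := by
    have : {h : G | h • x ∈ V0} = {g : G | ∃ y ∈ ({x} : Set X), g • y ∈ V0} := by
      ext g; simp
    rw [this]; exact transporter_compact hproper hV0c isCompact_singleton
  set D := C ∩ {h : G | h • x ∈ V0} with hDdef
  have hD : IsCompact D := hS.inter_left hCclosed
  have key : ∀ h : D, ∃ W : Set X, IsCompact W ∧ W ∈ 𝓝 x ∧ (h : G) • x ∉ W := by
    rintro ⟨h, hhC, hhS⟩
    have hne : h • x ≠ x := by
      intro hfix
      have hmem : h ∈ MulAction.stabilizer G x := hfix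
      have hb' := hb h⁻¹ (inv_mem hmem)
      have h0 : ‖h⁻¹ • b - b‖ = 0 := by rw [hb']; simp
      have : ε ≤ (0 : ℝ) := h0 ▸ hhC
      linarith
    obtain ⟨U1, U2, hU1, hU2, hxU1, hxU2, hdisj⟩ := t2_separation hne
    obtain ⟨W, hWc, hxW, hWU2⟩ := exists_compact_subset hU2 hxU2
    refine ⟨W, hWc, mem_of_superset (isOpen_interior.mem_nhds hxW) interior_subset, ?_⟩
    intro hmem
    exact (hdisj.ne_of_mem hxU1 (hWU2 hmem)) rfl
  choose W hWc hWn hWx using key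
  have hcover : D ⊆ ⋃ i : D, {h : G | h • x ∈ (W i)ᶜ} := fun h hh =>
    mem_iUnion.2 ⟨⟨h, hh⟩, hWx ⟨h, hh⟩⟩
  have hopen : ∀ i : D, IsOpen {h : G | h • x ∈ (W i)ᶜ} := fun i =>
    (hWc i).isClosed.isOpen_compl.preimage (continuous_id.smul continuous_const)
  obtain ⟨t, ht⟩ := hD.elim_finite_subcover _ hopen hcover
  refine ⟨V0 ∩ ⋂ i ∈ t, W i, ?_, ?_, ?_⟩
  · exact hV0c.inter_right (isClosed_biInter fun i _ => (hWc i).isClosed)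
  · exact Filter.inter_mem hV0n ((Filter.biInter_mem t.finite_toSet).2 fun i _ => hWn i)
  · intro h hh
    by_contra hlt
    push_neg at hlt
    have hhC : h ∈ C := le_of_lt hlt
    have hhD : h ∈ D := ⟨hhC, hh.1⟩
    obtain ⟨i, hi, hmem⟩ := mem_iUnion₂.1 (ht hhD)
    exact hmem (mem_iInter₂.1 hh.2 i hi)


theorem indAlg_zero_mem : (0 : X → B) ∈ IndAlg G X B :=
  ⟨continuous_const, fun g y => by simp, ⟨0, fun y => by simp⟩,
    fun ε hε => ⟨∅, isCompact_empty, fun y _ => by simpa using hε⟩⟩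

theorem indAlg_add_mem {F₁ F₂ : X → B} (h₁ : F₁ ∈ IndAlg G X B) (h₂ : F₂ ∈ IndAlg G X B) :
    F₁ + F₂ ∈ IndAlg G X B := by
  obtain ⟨hc₁, he₁, ⟨C₁, hC₁⟩, hv₁⟩ := h₁
  obtain ⟨hc₂, he₂, ⟨C₂, hC₂⟩, hv₂⟩ := h₂
  refine ⟨hc₁.add hc₂, fun g y => by simp [he₁ g y, he₂ g y, smul_add],
    ⟨C₁ + C₂, fun y => (norm_add_le _ _).trans (add_le_add (hC₁ y) (hC₂ y))⟩, ?_⟩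
  intro ε hε
  obtain ⟨K₁, hK₁, hK₁'⟩ := hv₁ (ε / 2) (by linarith)
  obtain ⟨K₂, hK₂, hK₂'⟩ := hv₂ (ε / 2) (by linarith)
  refine ⟨K₁ ∪ K₂, hK₁.union hK₂, fun y hy => ?_⟩
  have h1 := hK₁' y (fun h => hy (Or.inl h))
  have h2 := hK₂' y (fun h => hy (Or.inr h))
  calc ‖(F₁ + F₂) y‖ ≤ ‖F₁ y‖ + ‖F₂ y‖ := norm_add_le _ _
    _ < ε / 2 + ε / 2 := add_lt_add h1 h2
    _ = ε := by ring

theorem indAlg_mul_mem {F₁ F₂ : X → B} (h₁ : F₁ ∈ IndAlg G X B) (h₂ : F₂ ∈ IndAlg G X B) :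
    F₁ * F₂ ∈ IndAlg G X B := by
  obtain ⟨hc₁, he₁, ⟨C₁, hC₁⟩, hv₁⟩ := h₁
  obtain ⟨hc₂, he₂, ⟨C₂, hC₂⟩, hv₂⟩ := h₂
  have hC₂' : ∀ y, ‖F₂ y‖ ≤ max C₂ 0 := fun y => (hC₂ y).trans (le_max_left _ _)
  have hC₂0 : (0:ℝ) ≤ max C₂ 0 := le_max_right _ _
  refine ⟨hc₁.mul hc₂, fun g y => by simp [Pi.mul_apply, he₁ g y, he₂ g y, smul_mul'],
    ⟨C₁ * max C₂ 0, fun y => (norm_mul_le _ _).trans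
      (mul_le_mul (hC₁ y) (hC₂' y) (norm_nonneg _) ((norm_nonneg _).trans (hC₁ y)))⟩, ?_⟩
  intro ε hε
  have hden : (0:ℝ) < max C₂ 0 + 1 := by linarith
  obtain ⟨K₁, hK₁, hK₁'⟩ := hv₁ (ε / (max C₂ 0 + 1)) (div_pos hε hden)
  refine ⟨K₁, hK₁, fun y hy => ?_⟩
  have h1 := hK₁' y hy
  calc ‖(F₁ * F₂) y‖ ≤ ‖F₁ y‖ * ‖F₂ y‖ := norm_mul_le _ _
    _ ≤ ‖F₁ y‖ * (max C₂ 0 + 1) :=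
        mul_le_mul_of_nonneg_left ((hC₂' y).trans (by linarith)) (norm_nonneg _)
    _ < (ε / (max C₂ 0 + 1)) * (max C₂ 0 + 1) := by
        exact mul_lt_mul_of_pos_right h1 hden
    _ = ε := div_mul_cancel₀ ε (ne_of_gt hden)

theorem indAlg_star_mem (hstar : ∀ (g : G) (b : B), g • (star b) = star (g • b))
    {F : X → B} (h : F ∈ IndAlg G X B) : star F ∈ IndAlg G X B := by
  obtain ⟨hc, he, ⟨C, hC⟩, hv⟩ := h
  refine ⟨hc.star, fun g y => by simp [Pi.star_apply, he g y, hstar], 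
    ⟨C, fun y => by simpa using hC y⟩, ?_⟩
  intro ε hε
  obtain ⟨K, hK, hK'⟩ := hv ε hε
  exact ⟨K, hK, fun y hy => by simpa using hK' y hy⟩

theorem indAlg_smul_mem (a : ℂ) {F : X → B} (h : F ∈ IndAlg G X B) :
    a • F ∈ IndAlg G X B := by
  obtain ⟨hc, he, ⟨C, hC⟩, hv⟩ := h
  refine ⟨hc.const_smul a, fun g y => by
      simp only [Pi.smul_apply, he g y, (smul_comm g a (F y)).symm], 
    ⟨‖a‖ * C, fun y => by
      rw [Pi.smul_apply, norm_smul]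
      exact mul_le_mul_of_nonneg_left (hC y) (norm_nonneg a)⟩, ?_⟩
  intro ε hε
  have hden : (0:ℝ) < ‖a‖ + 1 := by positivity
  obtain ⟨K, hK, hK'⟩ := hv (ε / (‖a‖ + 1)) (div_pos hε hden)
  refine ⟨K, hK, fun y hy => ?_⟩
  rw [Pi.smul_apply, norm_smul]
  calc ‖a‖ * ‖F y‖ ≤ (‖a‖ + 1) * ‖F y‖ := by
        apply mul_le_mul_of_nonneg_right (by linarith) (norm_nonneg _)
    _ < (‖a‖ + 1) * (ε / (‖a‖ + 1)) := by
        exact (mul_lt_mul_iff_right₀ hden).2 (hK' y hy)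
    _ = ε := mul_div_cancel₀ ε (ne_of_gt hden)


section Conv
variable (μ : Measure G) [μ.IsHaarMeasure] {φ : X → ℝ}

noncomputable def actCLM (hstar : ∀ (g : G) (b : B), g • (star b) = star (g • b)) (g : G) :
    B →L[ℂ] B :=
  LinearMap.mkContinuous
    { toFun := fun b => g • b
      map_add' := smul_add g
      map_smul' := fun c b => smul_comm g c b } 1
    (fun b => by rw [one_mul]; exact le_of_eq (norm_smul_eq hstar g b))

variable (μ : Measure G) [μ.IsHaarMeasure] {φ : X → ℝ}

/-- support and integrability of the convolution integrand -/

theorem conv_integrand_supp (hproper : ProperAction G X)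
    (hφs : HasCompactSupport φ) {E : Type*} [NormedAddCommGroup E] [NormedSpace ℝ E]
    (v : G → E) (y : X) :
    HasCompactSupport fun g : G => φ (g⁻¹ • y) • v g := by
  have hT : IsCompact {g : G | ∃ z ∈ ({y} : Set X), g⁻¹ • z ∈ tsupport φ} :=
    transporter_inv_compact hproper hφs isCompact_singleton
  apply HasCompactSupport.intro hT
  intro g hg
  have : φ (g⁻¹ • y) = 0 := by
    by_contra h
    exact hg ⟨y, rfl, subset_tsupport φ h⟩
  simp [this]

theorem conv_integrand_integrable (hproper : ProperAction G X)
    (hφc : Continuous φ) (hφs : HasCompactSupport φ)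
    {E : Type*} [NormedAddCommGroup E] [NormedSpace ℝ E]
    {v : G → E} (hv : Continuous v) (y : X) :
    Integrable (fun g : G => φ (g⁻¹ • y) • v g) μ :=
  ((hφc.comp (continuous_inv.smul continuous_const)).smul hv).integrable_of_hasCompactSupport
    (conv_integrand_supp hproper hφs v y)

/-- continuity of the convolution in the space variable -/

theorem conv_continuous (hproper : ProperAction G X)
    (hφc : Continuous φ) (hφs : HasCompactSupport φ)
    {E : Type*} [NormedAddCommGroup E] [NormedSpace ℝ E] [CompleteSpace E]
    {v : G → E} (hv : Continuous v) {Cv : ℝ} (hvB : ∀ g, ‖v g‖ ≤ Cv) :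
    Continuous fun y : X => ∫ g, φ (g⁻¹ • y) • v g ∂μ := by
  have hCv0 : (0:ℝ) ≤ Cv := le_trans (norm_nonneg _) (hvB 1)
  have hint : ∀ y : X, Integrable (fun g : G => φ (g⁻¹ • y) • v g) μ :=
    conv_integrand_integrable μ hproper hφc hφs hv
  rw [continuous_iff_continuousAt]
  intro y0
  obtain ⟨L, hLc, hLn⟩ := exists_compact_mem_nhds y0
  have hy0L : y0 ∈ L := mem_of_mem_nhds hLn
  set T := {g : G | ∃ z ∈ L, g⁻¹ • z ∈ tsupport φ} with hTdef
  have hT : IsCompact T := transporter_inv_compact hproper hφs hLc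
  have hvanish : ∀ y ∈ L, ∀ g : G, g ∉ T → φ (g⁻¹ • y) • v g = 0 := by
    intro y hy g hg
    have : φ (g⁻¹ • y) = 0 := by
      by_contra h
      exact hg ⟨y, hy, subset_tsupport φ h⟩
    simp [this]
  set M := (μ T).toReal with hMdef
  have hM0 : 0 ≤ M := ENNReal.toReal_nonneg
  rw [ContinuousAt, Metric.tendsto_nhds]
  intro ε hε
  set δ := ε / ((M + 1) * (Cv + 1)) with hδdef
  have hδpos : 0 < δ := div_pos hε (by positivity)
  -- the tube lemma
  set Ψ : G × X → ℝ := fun p => |φ (p.1⁻¹ • p.2) - φ (p.1⁻¹ • y0)| with hΨdef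
  have hΨc : Continuous Ψ := by
    apply Continuous.abs
    exact ((hφc.comp ((continuous_fst.inv).smul continuous_snd)).sub
      (hφc.comp ((continuous_fst.inv).smul continuous_const)))
  have hO : IsOpen {p : G × X | Ψ p < δ} := isOpen_lt hΨc continuous_const
  have hsub : T ×ˢ ({y0} : Set X) ⊆ {p : G × X | Ψ p < δ} := by
    rintro ⟨g, y⟩ ⟨-, hy⟩
    rcases hy with rfl
    simpa [hΨdef] using hδpos
  obtain ⟨u, w, hu, hw, hTu, hyw, huw⟩ :=
    generalized_tube_lemma hT isCompact_singleton hO hsub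
  have hy0w : y0 ∈ w := hyw rfl
  filter_upwards [Filter.inter_mem (hw.mem_nhds hy0w) hLn] with y hy
  obtain ⟨hyw', hyL⟩ := hy
  -- pointwise bound
  have hptw : ∀ g : G,
      ‖φ (g⁻¹ • y) • v g - φ (g⁻¹ • y0) • v g‖ ≤ T.indicator (fun _ => δ * Cv) g := by
    intro g
    by_cases hg : g ∈ T
    · rw [indicator_of_mem hg]
      have hmem : (g, y) ∈ {p : G × X | Ψ p < δ} := huw ⟨hTu hg, hyw'⟩
      have hΨlt : |φ (g⁻¹ • y) - φ (g⁻¹ • y0)| < δ := hmem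
      calc ‖φ (g⁻¹ • y) • v g - φ (g⁻¹ • y0) • v g‖
          = ‖(φ (g⁻¹ • y) - φ (g⁻¹ • y0)) • v g‖ := by rw [sub_smul]
        _ = |φ (g⁻¹ • y) - φ (g⁻¹ • y0)| * ‖v g‖ := by
            rw [norm_smul, Real.norm_eq_abs]
        _ ≤ δ * Cv := mul_le_mul (le_of_lt hΨlt) (hvB g) (norm_nonneg _) (le_of_lt hδpos)
    · rw [indicator_of_notMem hg, hvanish y hyL g hg, hvanish y0 hy0L g hg, sub_zero,
        norm_zero]
  -- conclude
  rw [dist_eq_norm, ← integral_sub (hint y) (hint y0)]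
  calc ‖∫ g, (φ (g⁻¹ • y) • v g - φ (g⁻¹ • y0) • v g) ∂μ‖
      ≤ ∫ g, ‖φ (g⁻¹ • y) • v g - φ (g⁻¹ • y0) • v g‖ ∂μ := norm_integral_le_integral_norm _
    _ ≤ ∫ g, T.indicator (fun _ => δ * Cv) g ∂μ := by
        apply integral_mono ((hint y).sub (hint y0)).norm _ hptw
        exact (integrable_indicator_iff hT.isClosed.measurableSet).2
          (integrableOn_const hT.measure_lt_top.ne)
    _ = M • (δ * Cv) := integral_indicator_const _ hT.isClosed.measurableSet
    _ = (M * Cv) * δ := by rw [smul_eq_mul]; ring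
    _ < ((M + 1) * (Cv + 1)) * δ := by
        apply mul_lt_mul_of_pos_right _ hδpos
        nlinarith
    _ = ε := by
        rw [hδdef]
        field_simp

/-- left-invariance: equivariance of the scalar convolution -/

theorem conv_equiv_real (h : G) (y : X) :
    ∫ g, φ (g⁻¹ • (h • y)) ∂μ = ∫ g, φ (g⁻¹ • y) ∂μ := by
  have key := integral_mul_left_eq_self (μ := μ) (fun g => φ (g⁻¹ • (h • y))) h
  rw [← key]
  congr 1
  funext g
  rw [mul_inv_rev, mul_smul, inv_smul_smul]

theorem conv_equiv_vec (hproper : ProperAction G X)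
    (hstar : ∀ (g : G) (b : B), g • (star b) = star (g • b))
    (hcont : ∀ b : B, Continuous fun g : G => g • b)
    (hφc : Continuous φ) (hφs : HasCompactSupport φ) (b : B) (h : G) (y : X) :
    ∫ g, φ (g⁻¹ • (h • y)) • (g • b) ∂μ = h • ∫ g, φ (g⁻¹ • y) • (g • b) ∂μ := by
  set A : B →L[ℝ] B := (actCLM hstar h).restrictScalars ℝ with hA
  have hAapp : ∀ v : B, A v = h • v := fun v => rfl
  have key := integral_mul_left_eq_self (μ := μ) (fun g => φ (g⁻¹ • (h • y)) • (g • b)) h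
  rw [← key]
  have : ∀ g : G, φ ((h * g)⁻¹ • (h • y)) • ((h * g) • b) = A (φ (g⁻¹ • y) • (g • b)) := by
    intro g
    rw [mul_inv_rev, mul_smul, inv_smul_smul, mul_smul h g b]
    exact (A.map_smul _ _).symm
  rw [show (fun g => φ ((h * g)⁻¹ • (h • y)) • ((h * g) • b)) =
      fun g => A (φ (g⁻¹ • y) • (g • b)) from funext this]
  rw [A.integral_comp_comm (conv_integrand_integrable μ hproper hφc hφs (hcont b) y)]
  rfl


end Conv

theorem indAlg_approx (hproper : ProperAction G X)
    (hstar : ∀ (g : G) (b : B), g • (star b) = star (g • b))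
    (hcont : ∀ b : B, Continuous fun g : G => g • b)
    (μ : Measure G) [μ.IsHaarMeasure]
    (x : X) (b : B) (hb : ∀ k ∈ MulAction.stabilizer G x, k • b = b) {ε : ℝ} (hε : 0 < ε) :
    ∃ F ∈ IndAlg G X B, ‖F x - b‖ ≤ ε ∧ ∀ y, ‖F y‖ ≤ ‖b‖ := by
  obtain ⟨V, hVc, hVn, hV⟩ := exists_good_nhd hproper hcont x b hb hε
  have hxint : x ∈ interior V := mem_interior_iff_mem_nhds.2 hVn
  obtain ⟨φ₀, hφ1s, hφ0t, hφs, hφ01⟩ := exists_continuous_one_zero_of_isCompact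
    (isCompact_singleton : IsCompact ({x} : Set X)) (isOpen_interior.isClosed_compl)
    (disjoint_singleton_left.2 (fun h => h hxint))
  set φ : X → ℝ := ⇑φ₀ with hφdef
  have hφc : Continuous φ := φ₀.continuous
  have hφcs : HasCompactSupport φ := hφs
  have hφx : φ x = 1 := hφ1s rfl
  have hφnonneg : ∀ z, 0 ≤ φ z := fun z => (hφ01 z).1
  have hφle1 : ∀ z, φ z ≤ 1 := fun z => (hφ01 z).2
  have hsuppV : tsupport φ ⊆ V := by
    have h1 : support φ ⊆ interior V := by
      intro z hz
      by_contra h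
      exact hz (hφ0t h)
    exact closure_minimal (h1.trans interior_subset) hVc.isClosed
  -- the two integrals
  set c : X → ℝ := fun y => ∫ g, φ (g⁻¹ • y) • (1:ℝ) ∂μ with hcdef
  set Iv : X → B := fun y => ∫ g, φ (g⁻¹ • y) • (g • b) ∂μ with hIdef
  have hceq : ∀ y, c y = ∫ g, φ (g⁻¹ • y) ∂μ := by
    intro y; simp [hcdef, smul_eq_mul]
  -- integrability
  have hφy_cont : ∀ y : X, Continuous fun g : G => φ (g⁻¹ • y) := fun y =>
    hφc.comp (continuous_inv.smul continuous_const)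
  have hφy_int : ∀ y : X, Integrable (fun g : G => φ (g⁻¹ • y)) μ := by
    intro y
    have := conv_integrand_integrable μ hproper hφc hφcs
      (continuous_const : Continuous fun _ : G => (1:ℝ)) y
    simpa [smul_eq_mul] using this
  have hIv_int : ∀ y : X, Integrable (fun g : G => φ (g⁻¹ • y) • (g • b)) μ := fun y =>
    conv_integrand_integrable μ hproper hφc hφcs (hcont b) y
  -- positivity and bounds on c
  have hc_nonneg : ∀ y, 0 ≤ c y := by
    intro y
    rw [hceq]
    exact integral_nonneg fun g => hφnonneg _
  have hφx_supp : ∀ y : X, HasCompactSupport fun g : G => φ (g⁻¹ • y) := by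
    intro y
    have h := conv_integrand_supp hproper hφcs (fun _ : G => (1:ℝ)) y
    simpa [smul_eq_mul] using h
  have hcx_pos : 0 < c x := by
    rw [hceq]
    exact (hφy_cont x).integral_pos_of_hasCompactSupport_nonneg_nonzero (hφx_supp x)
      (fun g => hφnonneg _)
      (show φ ((1:G)⁻¹ • x) ≠ 0 by rw [inv_one, one_smul, hφx]; exact one_ne_zero)
  have hIv_bound : ∀ y, ‖Iv y‖ ≤ c y * ‖b‖ := by
    intro y
    calc ‖Iv y‖ ≤ ∫ g, ‖φ (g⁻¹ • y) • (g • b)‖ ∂μ := norm_integral_le_integral_norm _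
      _ = ∫ g, φ (g⁻¹ • y) * ‖b‖ ∂μ := by
          congr 1
          funext g
          rw [norm_smul, Real.norm_eq_abs, abs_of_nonneg (hφnonneg _), norm_smul_eq hstar]
      _ = (∫ g, φ (g⁻¹ • y) ∂μ) * ‖b‖ := integral_mul_const _ _
      _ = c y * ‖b‖ := by rw [hceq]
  have hmax_pos : ∀ y, 0 < max (c y) (c x) := fun y => lt_of_lt_of_le hcx_pos (le_max_right _ _)
  -- the function
  set F : X → B := fun y => (max (c y) (c x))⁻¹ • Iv y with hFdef
  have hFnorm : ∀ y, ‖F y‖ ≤ ‖b‖ := by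
    intro y
    rw [hFdef]
    simp only []
    rw [norm_smul, Real.norm_eq_abs, abs_of_pos (inv_pos.2 (hmax_pos y))]
    calc (max (c y) (c x))⁻¹ * ‖Iv y‖ ≤ (max (c y) (c x))⁻¹ * (c y * ‖b‖) :=
          mul_le_mul_of_nonneg_left (hIv_bound y) (le_of_lt (inv_pos.2 (hmax_pos y)))
      _ = ((max (c y) (c x))⁻¹ * c y) * ‖b‖ := by ring
      _ ≤ 1 * ‖b‖ := by
          apply mul_le_mul_of_nonneg_right _ (norm_nonneg b)
          rw [inv_mul_le_iff₀ (hmax_pos y), mul_one]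
          exact le_max_left _ _
      _ = ‖b‖ := one_mul _
  -- equivariance
  have hc_equiv : ∀ (h : G) (y : X), c (h • y) = c y := by
    intro h y
    rw [hceq, hceq]
    exact conv_equiv_real μ h y
  have hF_equiv : ∀ (h : G) (y : X), F (h • y) = h • F y := by
    intro h y
    rw [hFdef]
    simp only []
    rw [hc_equiv h y, hIdef]
    simp only []
    rw [conv_equiv_vec μ hproper hstar hcont hφc hφcs b h y]
    rw [← Complex.coe_smul, ← Complex.coe_smul]
    exact (smul_comm h _ _).symm
  -- continuity
  have hc_cont : Continuous c :=
    conv_continuous μ hproper hφc hφcs continuous_const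
      (fun g => by rw [norm_one]) (Cv := 1)
  have hIv_cont : Continuous Iv :=
    conv_continuous μ hproper hφc hφcs (hcont b)
      (fun g => le_of_eq (norm_smul_eq hstar g b)) (Cv := ‖b‖)
  have hF_cont : Continuous F :=
    (((hc_cont.max continuous_const).inv₀ fun y => ne_of_gt (hmax_pos y)).smul hIv_cont)
  -- vanishing at infinity
  have hIv_zero : ∀ y : X,
      Quotient.mk (MulAction.orbitRel G X) y ∉
        Quotient.mk (MulAction.orbitRel G X) '' tsupport φ → Iv y = 0 := by
    intro y hy
    have hzero : ∀ g : G, φ (g⁻¹ • y) = 0 := by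
      intro g
      by_contra h
      apply hy
      exact ⟨g⁻¹ • y, subset_tsupport φ h,
        Quotient.sound (MulAction.mem_orbit y g⁻¹)⟩
    rw [hIdef]
    simp only []
    have : (fun g : G => φ (g⁻¹ • y) • (g • b)) = fun _ => (0 : B) := by
      funext g
      rw [hzero g, zero_smul]
    rw [this, integral_zero]
  -- assemble membership
  refine ⟨F, ⟨hF_cont, hF_equiv, ⟨‖b‖, hFnorm⟩, ?_⟩, ?_, hFnorm⟩
  · intro ε' hε'
    refine ⟨Quotient.mk (MulAction.orbitRel G X) '' tsupport φ,
      hφcs.image continuous_quotient_mk', fun y hy => ?_⟩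
    rw [hFdef]
    simp only []
    rw [hIv_zero y hy, smul_zero, norm_zero]
    exact hε'
  -- the estimate at x
  · have hFx : F x = (c x)⁻¹ • Iv x := by rw [hFdef]; simp only []; rw [max_self]
    have hkey : Iv x - c x • b = ∫ g, φ (g⁻¹ • x) • (g • b - b) ∂μ := by
      have h1 : ∀ g : G, φ (g⁻¹ • x) • (g • b - b) =
          φ (g⁻¹ • x) • (g • b) - φ (g⁻¹ • x) • b := fun g => smul_sub _ _ _
      rw [show (fun g : G => φ (g⁻¹ • x) • (g • b - b)) =
          fun g => φ (g⁻¹ • x) • (g • b) - φ (g⁻¹ • x) • b from funext h1]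
      rw [integral_sub (hIv_int x)
        (show Integrable (fun g : G => φ (g⁻¹ • x) • b) μ from
          ((hφy_cont x).smul continuous_const).integrable_of_hasCompactSupport
          (conv_integrand_supp hproper hφcs (fun _ => b) x))]
      rw [integral_smul_const, ← hceq]
    have hnorm_integrand : ∀ g : G,
        ‖φ (g⁻¹ • x) • (g • b - b)‖ ≤ φ (g⁻¹ • x) * ε := by
      intro g
      rw [norm_smul, Real.norm_eq_abs, abs_of_nonneg (hφnonneg _)]
      rcases eq_or_ne (φ (g⁻¹ • x)) 0 with h0 | h0
      · rw [h0, zero_mul, zero_mul]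
      · have hmem : g⁻¹ • x ∈ V := hsuppV (subset_tsupport φ h0)
        have := hV g⁻¹ hmem
        rw [inv_inv] at this
        exact mul_le_mul_of_nonneg_left this (hφnonneg _)
    have hest : ‖Iv x - c x • b‖ ≤ c x * ε := by
      rw [hkey]
      calc ‖∫ g, φ (g⁻¹ • x) • (g • b - b) ∂μ‖
          ≤ ∫ g, ‖φ (g⁻¹ • x) • (g • b - b)‖ ∂μ := norm_integral_le_integral_norm _
        _ ≤ ∫ g, φ (g⁻¹ • x) * ε ∂μ := by
            apply integral_mono _ _ hnorm_integrand
            · exact (conv_integrand_integrable μ hproper hφc hφcs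
                ((hcont b).sub continuous_const) x).norm
            · exact (hφy_int x).mul_const ε
        _ = (∫ g, φ (g⁻¹ • x) ∂μ) * ε := integral_mul_const _ _
        _ = c x * ε := by rw [hceq]
    have hFxb : F x - b = (c x)⁻¹ • (Iv x - c x • b) := by
      rw [hFx, smul_sub, smul_smul, inv_mul_cancel₀ (ne_of_gt hcx_pos), one_smul]
    rw [hFxb, norm_smul, Real.norm_eq_abs, abs_of_pos (inv_pos.2 hcx_pos)]
    calc (c x)⁻¹ * ‖Iv x - c x • b‖ ≤ (c x)⁻¹ * (c x * ε) :=
          mul_le_mul_of_nonneg_left hest (le_of_lt (inv_pos.2 hcx_pos))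
      _ = ε := by field_simp


theorem smul_tendsto (hstar : ∀ (g : G) (b : B), g • (star b) = star (g • b))
    (g : G) {f : ℕ → B} {l : B} (h : Filter.Tendsto f atTop (𝓝 l)) :
    Filter.Tendsto (fun n => g • f n) atTop (𝓝 (g • l)) := by
  have hc : Continuous fun v : B => g • v := by
    apply AddMonoidHomClass.continuous_of_bound
      (AddMonoidHom.mk' (fun v : B => g • v) (smul_add g)) 1
    intro v
    rw [one_mul]
    exact le_of_eq (norm_smul_eq hstar g v)
  exact (hc.tendsto l).comp h

theorem indAlg_mem_of_tendstoUniformly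
    (hstar : ∀ (g : G) (b : B), g • (star b) = star (g • b))
    {Fn : ℕ → X → B} {F : X → B}
    (hmem : ∀ n, Fn n ∈ IndAlg G X B) (hT : TendstoUniformly Fn F atTop) :
    F ∈ IndAlg G X B := by
  have hptw : ∀ y, Tendsto (fun n => Fn n y) atTop (𝓝 (F y)) := fun y => hT.tendsto_at y
  refine ⟨hT.continuous (Frequently.of_forall fun n => (hmem n).1), ?_, ?_, ?_⟩
  · intro g y
    have h2 : Tendsto (fun n => g • Fn n y) atTop (𝓝 (g • F y)) :=
      smul_tendsto hstar g (hptw y)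
    have h1 : Tendsto (fun n => g • Fn n y) atTop (𝓝 (F (g • y))) := by
      have h := hptw (g • y)
      rwa [show (fun n => Fn n (g • y)) = fun n => g • Fn n y from
        funext fun n => (hmem n).2.1 g y] at h
    exact tendsto_nhds_unique h1 h2
  · obtain ⟨n, hn⟩ : ∃ n, ∀ y, dist (F y) (Fn n y) < 1 :=
      ((Metric.tendstoUniformly_iff.1 hT) 1 one_pos).exists
    obtain ⟨C, hC⟩ := (hmem n).2.2.1
    refine ⟨C + 1, fun y => ?_⟩
    calc ‖F y‖ = ‖Fn n y + (F y - Fn n y)‖ := by rw [add_sub_cancel]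
      _ ≤ ‖Fn n y‖ + ‖F y - Fn n y‖ := norm_add_le _ _
      _ ≤ C + 1 := by
          apply add_le_add (hC y)
          rw [← dist_eq_norm]
          exact le_of_lt (hn y)
  · intro ε hε
    obtain ⟨n, hn⟩ : ∃ n, ∀ y, dist (F y) (Fn n y) < ε / 2 :=
      ((Metric.tendstoUniformly_iff.1 hT) (ε / 2) (by linarith)).exists
    obtain ⟨K, hK, hK'⟩ := (hmem n).2.2.2 (ε / 2) (by linarith)
    refine ⟨K, hK, fun y hy => ?_⟩
    calc ‖F y‖ = ‖Fn n y + (F y - Fn n y)‖ := by rw [add_sub_cancel]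
      _ ≤ ‖Fn n y‖ + ‖F y - Fn n y‖ := norm_add_le _ _
      _ < ε / 2 + ε / 2 := by
          apply add_lt_add (hK' y hy)
          rw [← dist_eq_norm]
          exact hn y
      _ = ε := by ring

theorem indAlg_eval_surj (hproper : ProperAction G X)
    (hstar : ∀ (g : G) (b : B), g • (star b) = star (g • b))
    (hcont : ∀ b : B, Continuous fun g : G => g • b)
    (μ : Measure G) [μ.IsHaarMeasure] (x : X) (b : B)
    (hb : ∀ k ∈ MulAction.stabilizer G x, k • b = b) :
    ∃ F ∈ IndAlg G X B, F x = b := by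
  classical
  have step : ∀ b' : B, ∃ Fb : X → B,
      (∀ k ∈ MulAction.stabilizer G x, k • b' = b') →
      Fb ∈ IndAlg G X B ∧ ‖Fb x - b'‖ ≤ ‖b'‖ / 2 ∧ ∀ y, ‖Fb y‖ ≤ ‖b'‖ := by
    intro b'
    by_cases hb' : ∀ k ∈ MulAction.stabilizer G x, k • b' = b'
    · rcases eq_or_ne b' 0 with rfl | hne
      · exact ⟨0, fun _ => ⟨indAlg_zero_mem, by simp, fun y => by simp⟩⟩
      · have hpos : 0 < ‖b'‖ / 2 := by
          have : 0 < ‖b'‖ := norm_pos_iff.2 hne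
          linarith
        obtain ⟨F, hF, h1, h2⟩ := indAlg_approx hproper hstar hcont μ x b' hb' hpos
        exact ⟨F, fun _ => ⟨hF, h1, h2⟩⟩
    · exact ⟨0, fun h => absurd h hb'⟩
  choose P hP using step
  set bs : ℕ → B := fun n => Nat.recAux b (fun _ b' => b' - P b' x) n with hbs
  have hbs0 : bs 0 = b := rfl
  have hbs_succ : ∀ n, bs (n + 1) = bs n - P (bs n) x := fun n => rfl
  have hfix : ∀ n, ∀ k ∈ MulAction.stabilizer G x, k • bs n = bs n := by
    intro n
    induction n with
    | zero => exact hb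
    | succ n ih =>
      intro k hk
      have hPn := (hP (bs n) ih).1
      have heq : k • P (bs n) x = P (bs n) x := by
        rw [← hPn.2.1 k x, MulAction.mem_stabilizer_iff.1 hk]
      rw [hbs_succ, smul_sub, ih k hk, heq]
  have hnorm : ∀ n, ‖bs n‖ ≤ ‖b‖ / 2 ^ n := by
    intro n
    induction n with
    | zero => simp [hbs0]
    | succ n ih =>
      have h1 : ‖bs (n + 1)‖ ≤ ‖bs n‖ / 2 := by
        rw [hbs_succ, norm_sub_rev]
        exact (hP (bs n) (hfix n)).2.1
      calc ‖bs (n + 1)‖ ≤ ‖bs n‖ / 2 := h1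
        _ ≤ (‖b‖ / 2 ^ n) / 2 := by linarith
        _ = ‖b‖ / 2 ^ (n + 1) := by rw [div_div, pow_succ]
  set Fn : ℕ → X → B := fun n => P (bs n) with hFn
  have hFn_mem : ∀ n, Fn n ∈ IndAlg G X B := fun n => (hP (bs n) (hfix n)).1
  have hFn_bound : ∀ (n : ℕ) (y : X), ‖Fn n y‖ ≤ ‖b‖ / 2 ^ n := fun n y =>
    le_trans ((hP (bs n) (hfix n)).2.2 y) (hnorm n)
  have hu : Summable fun n : ℕ => ‖b‖ / 2 ^ n := by
    have := (summable_geometric_two).mul_left ‖b‖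
    simpa [div_eq_mul_inv, one_div, inv_pow] using this
  have hTU : TendstoUniformly (fun N y => ∑ n ∈ Finset.range N, Fn n y)
      (fun y => ∑' n, Fn n y) atTop := tendstoUniformly_tsum_nat hu hFn_bound
  set F : X → B := fun y => ∑' n, Fn n y with hFdef
  have hS_mem : ∀ N : ℕ, (fun y => ∑ n ∈ Finset.range N, Fn n y) ∈ IndAlg G X B := by
    intro N
    induction N with
    | zero => simp only [Finset.range_zero, Finset.sum_empty]; exact (indAlg_zero_mem : (0 : X → B) ∈ IndAlg G X B)
    | succ N ih =>
      have h := indAlg_add_mem ih (hFn_mem N)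
      have heq : ((fun y => ∑ n ∈ Finset.range N, Fn n y) + Fn N) =
          fun y => ∑ n ∈ Finset.range (N + 1), Fn n y := by
        funext y
        rw [Pi.add_apply, Finset.sum_range_succ]
      rwa [heq] at h
  have hF_mem : F ∈ IndAlg G X B :=
    indAlg_mem_of_tendstoUniformly hstar hS_mem hTU
  refine ⟨F, hF_mem, ?_⟩
  have hpart : ∀ N : ℕ, ∑ n ∈ Finset.range N, Fn n x = b - bs N := by
    intro N
    induction N with
    | zero => simp [hbs0]
    | succ N ih =>
      rw [Finset.sum_range_succ, ih, hbs_succ]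
      abel
  have hbs_lim : Tendsto bs atTop (𝓝 0) := by
    apply squeeze_zero_norm hnorm
    have h2 : Tendsto (fun n : ℕ => ‖b‖ * (1 / 2 : ℝ) ^ n) atTop (𝓝 (‖b‖ * 0)) :=
      (tendsto_pow_atTop_nhds_zero_of_lt_one (by norm_num) (by norm_num)).const_mul ‖b‖
    simpa [div_eq_mul_inv, one_div, inv_pow, mul_zero] using h2
  have h1 : Tendsto (fun N => ∑ n ∈ Finset.range N, Fn n x) atTop (𝓝 b) := by
    rw [show (fun N => ∑ n ∈ Finset.range N, Fn n x) = fun N => b - bs N from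
      funext hpart]
    simpa using tendsto_const_nhds.sub hbs_lim
  have h2 : Tendsto (fun N => ∑ n ∈ Finset.range N, Fn n x) atTop (𝓝 (F x)) :=
    hTU.tendsto_at x
  exact tendsto_nhds_unique h2 h1


end Aux

/-- Let `G` be a locally compact Hausdorff group with a left Haar measure,
acting properly on a locally compact Hausdorff space `X`, and let `β` be a
strongly continuous action of `G` by `*`-automorphisms on a C*-algebra `B`
(here encoded by `MulSemiringAction G B` together with `ℂ`-linearity,
`*`-preservation and strong continuity).  Then for every `x ∈ X` the
evaluation map `q_x : C₀(X ×_G B) → B, F ↦ F x` is a `*`-homomorphism (its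
domain is closed under the pointwise operations, and evaluation respects
them), its image is exactly the fixed-point algebra
`B^{G_x} = {b : β_k b = b ∀ k ∈ G_x}`, and its kernel is
`{F : F vanishes on the orbit G • x} = {F : F x = 0}`. -/
theorem evaluation_of_generalized_fixedPointAlgebra
    (G : Type*) [Group G] [TopologicalSpace G] [IsTopologicalGroup G]
    [LocallyCompactSpace G] [T2Space G]
    [MeasurableSpace G] [BorelSpace G]
    (μ : Measure G) [μ.IsHaarMeasure]
    (X : Type*) [TopologicalSpace X] [LocallyCompactSpace X] [T2Space X]
    [MulAction G X] [ContinuousSMul G X] (hproper : ProperAction G X)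
    (B : Type*) [NormedRing B] [StarRing B] [CStarRing B] [NormedAlgebra ℂ B]
    [StarModule ℂ B] [CompleteSpace B]
    [MulSemiringAction G B] [SMulCommClass G ℂ B]
    (hstar : ∀ (g : G) (b : B), g • (star b) = star (g • b))
    (hcont : ∀ b : B, Continuous fun g : G => g • b)
    (x : X) :
    (∀ F₁ ∈ IndAlg G X B, ∀ F₂ ∈ IndAlg G X B,
        F₁ + F₂ ∈ IndAlg G X B ∧ F₁ * F₂ ∈ IndAlg G X B) ∧
    (∀ F ∈ IndAlg G X B, star F ∈ IndAlg G X B) ∧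
    (∀ (a : ℂ), ∀ F ∈ IndAlg G X B, a • F ∈ IndAlg G X B) ∧
    (∀ F₁ ∈ IndAlg G X B, ∀ F₂ ∈ IndAlg G X B,
        (F₁ + F₂) x = F₁ x + F₂ x ∧ (F₁ * F₂) x = F₁ x * F₂ x) ∧
    (∀ F ∈ IndAlg G X B, (star F) x = star (F x)) ∧
    (∀ (a : ℂ), ∀ F ∈ IndAlg G X B, (a • F) x = a • F x) ∧
    ((fun F : X → B => F x) '' IndAlg G X B
        = {b : B | ∀ k ∈ MulAction.stabilizer G x, k • b = b}) ∧
    ({F ∈ IndAlg G X B | F x = 0}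
        = {F ∈ IndAlg G X B | ∀ y ∈ MulAction.orbit G x, F y = 0}) := by
  refine ⟨?_, ?_, ?_, ?_, ?_, ?_, ?_, ?_⟩
  · intro F₁ h₁ F₂ h₂
    exact ⟨indAlg_add_mem h₁ h₂, indAlg_mul_mem h₁ h₂⟩
  · intro F h
    exact indAlg_star_mem hstar h
  · intro a F h
    exact indAlg_smul_mem a h
  · intro F₁ _ F₂ _
    exact ⟨rfl, rfl⟩
  · intro F _
    rfl
  · intro a F _
    rfl
  · apply Set.eq_of_subset_of_subset
    · rintro b ⟨F, hF, rfl⟩ k hk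
      rw [← hF.2.1 k x, MulAction.mem_stabilizer_iff.1 hk]
    · intro b hb
      obtain ⟨F, hF, hFx⟩ := indAlg_eval_surj hproper hstar hcont μ x b hb
      exact ⟨F, hF, hFx⟩
  · apply Set.eq_of_subset_of_subset
    · rintro F ⟨hF, hFx⟩
      refine ⟨hF, ?_⟩
      rintro y ⟨g, rfl⟩
      rw [hF.2.1 g x, hFx, smul_zero]
    · rintro F ⟨hF, horb⟩
      exact ⟨hF, horb x (MulAction.mem_orbit_self x)⟩
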